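/- Let Λ ⊂ ℝ^d be a full-rank lattice with dual Λ*, K ≥ 1 an integer, and t > 1 a real number. Then Σ_{X ∈ (Λ*)^K, X ≠ 0} ‖X‖^{-dK-t} ≤ 6^{dK} ζ(t) λ_d(Λ)^{dK+t}, where ζ is the Riemann zeta function. -/

import Mathlib

open scoped ENNReal

lemma zeta_summable {t : ℝ} (ht : 1 < t) : Summable (fun n : ℕ => ((n : ℝ) + 1) ^ (-t)) := by
  have h : Summable (fun n : ℕ => (n : ℝ) ^ (-t)) := Real.summable_nat_rpow.mpr (by linarith)
  exact (h.comp_injective Nat.succ_injective).congr fun n => by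
    simp [Function.comp, Nat.succ_eq_add_one]

lemma piLp_apply_norm_le {K : ℕ} {E : Type*} [NormedAddCommGroup E] [InnerProductSpace ℝ E]
    (X : PiLp 2 (fun _ : Fin K => E)) (k : Fin K) : ‖X k‖ ≤ ‖X‖ := by
  have h2 : ‖X k‖ ^ 2 ≤ ‖X‖ ^ 2 := by
    rw [PiLp.norm_sq_eq_of_L2]
    exact Finset.single_le_sum (f := fun i => ‖X i‖ ^ 2) (fun i _ => by positivity)
      (Finset.mem_univ k)
  exact (pow_le_pow_iff_left₀ (norm_nonneg _) (norm_nonneg _) two_ne_zero).mp h2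

lemma inner_zero_forall_eq_zero {d : ℕ} (v : Fin d → EuclideanSpace ℝ (Fin d))
    (hvi : LinearIndependent ℝ v) (x : EuclideanSpace ℝ (Fin d))
    (h : ∀ j, (inner ℝ x (v j) : ℝ) = 0) : x = 0 := by
  have hspan : Submodule.span ℝ (Set.range v) = ⊤ := by
    rcases Nat.eq_zero_or_pos d with rfl | hd
    · have : Subsingleton (EuclideanSpace ℝ (Fin 0)) := by infer_instance
      exact Subsingleton.elim _ _
    · haveI : Nonempty (Fin d) := ⟨⟨0, hd⟩⟩
      exact hvi.span_eq_top_of_card_eq_finrank (by simp)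
  have hx : ∀ y ∈ Submodule.span ℝ (Set.range v), (inner ℝ x y : ℝ) = 0 := by
    intro y hy
    induction hy using Submodule.span_induction with
    | mem y hy => obtain ⟨j, rfl⟩ := hy; exact h j
    | zero => simp
    | add a b _ _ ha hb => rw [inner_add_right, ha, hb, add_zero]
    | smul r a _ ha => rw [real_inner_smul_right, ha, mul_zero]
  have := hx x (hspan ▸ Submodule.mem_top)
  rwa [real_inner_self_eq_norm_sq, pow_eq_zero_iff two_ne_zero, norm_eq_zero] at this

lemma key (d K : ℕ) (hd : 0 < d) (hK : 0 < K)
    (Λ : AddSubgroup (EuclideanSpace ℝ (Fin d)))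
    (t : ℝ) (ht : 1 < t) (c : ℝ) (hc : 0 < c)
    (v : Fin d → EuclideanSpace ℝ (Fin d)) (hvi : LinearIndependent ℝ v)
    (hvm : ∀ j, v j ∈ Λ) (hvn : ∀ j, ‖v j‖ ≤ c) :
    ∑' X : {X : PiLp 2 (fun _ : Fin K => EuclideanSpace ℝ (Fin d)) //
        (∀ k, ∀ y ∈ Λ, ∃ n : ℤ, (inner ℝ (X k) y : ℝ) = n) ∧ X ≠ 0},
      ‖(X : PiLp 2 (fun _ : Fin K => EuclideanSpace ℝ (Fin d)))‖ ^ (-((d * K : ℝ) + t))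
      ≤ 3 ^ (d * K) * (∑' n : ℕ, ((n : ℝ) + 1) ^ (-t)) * c ^ ((d * K : ℝ) + t) := by
  classical
  set s : ℝ := (d * K : ℝ) + t with hs_def
  have hs : 0 < s := by positivity
  set D := {X : PiLp 2 (fun _ : Fin K => EuclideanSpace ℝ (Fin d)) //
        (∀ k, ∀ y ∈ Λ, ∃ n : ℤ, (inner ℝ (X k) y : ℝ) = n) ∧ X ≠ 0} with hD
  haveI : Nonempty (Fin K × Fin d) := ⟨⟨⟨0, hK⟩, ⟨0, hd⟩⟩⟩
  -- integer inner ℝ products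
  set n : D → Fin K → Fin d → ℤ :=
    fun X k j => (X.2.1 k (v j) (hvm j)).choose with hn_def
  have hn : ∀ (X : D) k j, (inner ℝ (X.1 k) (v j) : ℝ) = n X k j :=
    fun X k j => (X.2.1 k (v j) (hvm j)).choose_spec
  -- max norm
  set M : D → ℕ := fun X => Finset.univ.sup (fun p : Fin K × Fin d => (n X p.1 p.2).natAbs)
    with hM_def
  have hM1 : ∀ X : D, 1 ≤ M X := by
    intro X
    by_contra h
    push_neg at h
    interval_cases hMX : M X
    · apply X.2.2
      have hz : ∀ k j, n X k j = 0 := by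
        intro k j
        have : (n X k j).natAbs ≤ 0 := hMX ▸ Finset.le_sup (f := fun p : Fin K × Fin d =>
          (n X p.1 p.2).natAbs) (Finset.mem_univ (k, j))
        omega
      refine PiLp.ext fun k => ?_
      refine inner_zero_forall_eq_zero v hvi _ fun j => ?_
      rw [hn X k j, hz k j, Int.cast_zero]
  have hM2 : ∀ X : D, (M X : ℝ) ≤ ‖X.1‖ * c := by
    intro X
    obtain ⟨p, -, hp⟩ := Finset.exists_mem_eq_sup Finset.univ Finset.univ_nonempty
      (fun p : Fin K × Fin d => (n X p.1 p.2).natAbs)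
    rw [show M X = (n X p.1 p.2).natAbs from hp]
    calc ((n X p.1 p.2).natAbs : ℝ) = |(n X p.1 p.2 : ℝ)| := by
          rw [Nat.cast_natAbs]; push_cast; ring_nf
      _ = |(inner ℝ (X.1 p.1) (v p.2) : ℝ)| := by rw [hn]
      _ ≤ ‖X.1 p.1‖ * ‖v p.2‖ := abs_real_inner_le_norm _ _
      _ ≤ ‖X.1‖ * c := by
          exact mul_le_mul (piLp_apply_norm_le _ _) (hvn _) (norm_nonneg _) (norm_nonneg _)
  -- pointwise bound
  have hpt : ∀ X : D, ‖X.1‖ ^ (-s) ≤ c ^ s * ((M X : ℝ)) ^ (-s) := by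
    intro X
    have hMpos : (0 : ℝ) < M X := by exact_mod_cast hM1 X
    have hlow : (M X : ℝ) / c ≤ ‖X.1‖ := (div_le_iff₀ hc).mpr (hM2 X)
    have h1 : ‖X.1‖ ^ (-s) ≤ ((M X : ℝ) / c) ^ (-s) :=
      Real.rpow_le_rpow_of_nonpos (by positivity) hlow (neg_nonpos.mpr hs.le)
    refine h1.trans_eq ?_
    rw [Real.rpow_neg (by positivity), Real.div_rpow hMpos.le hc.le, inv_div,
      div_eq_mul_inv, Real.rpow_neg hMpos.le]
  -- the target real quantities
  set ζ : ℝ := ∑' n : ℕ, ((n : ℝ) + 1) ^ (-t) with hζ_def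
  have hζsum : Summable (fun n : ℕ => ((n : ℝ) + 1) ^ (-t)) := zeta_summable ht
  have hζ0 : 0 ≤ ζ := tsum_nonneg fun n => Real.rpow_nonneg (by positivity) _
  set B : ℝ := 3 ^ (d * K) * ζ * c ^ s with hB_def
  have hB0 : 0 ≤ B := by positivity
  -- sup norm of integer vectors
  set Msup : ((Fin K × Fin d) → ℤ) → ℕ :=
    fun m => Finset.univ.sup (fun p => (m p).natAbs) with hMsup_def
  have hMM : ∀ X : D, M X = Msup (fun p => n X p.1 p.2) := fun X => rfl
  -- first injection
  have hnz : ∀ X : D, (fun p : Fin K × Fin d => n X p.1 p.2) ≠ 0 := by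
    intro X h
    apply X.2.2
    refine PiLp.ext fun k => ?_
    refine inner_zero_forall_eq_zero v hvi _ fun j => ?_
    have : n X k j = 0 := congrFun h (k, j)
    rw [hn X k j, this, Int.cast_zero]
  set ι₀ : D → {m : (Fin K × Fin d) → ℤ // m ≠ 0} :=
    fun X => ⟨fun p => n X p.1 p.2, hnz X⟩ with hι₀_def
  have hι₀inj : Function.Injective ι₀ := by
    intro X Y h
    have h' : ∀ k j, n X k j = n Y k j := fun k j =>
      congrFun (Subtype.ext_iff.mp h) (k, j)
    apply Subtype.ext
    refine PiLp.ext fun k => ?_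
    have : X.1 k - Y.1 k = 0 := by
      refine inner_zero_forall_eq_zero v hvi _ fun j => ?_
      rw [inner_sub_left, hn X k j, hn Y k j, h' k j, sub_self]
    exact sub_eq_zero.mp this
  -- nonzero integer vectors have positive sup norm
  have hMsup1 : ∀ m : {m : (Fin K × Fin d) → ℤ // m ≠ 0}, 1 ≤ Msup m.1 := by
    intro m
    by_contra h
    push_neg at h
    apply m.2
    funext p
    have : (m.1 p).natAbs ≤ Msup m.1 :=
      Finset.le_sup (f := fun p => (m.1 p).natAbs) (Finset.mem_univ p)
    have : (m.1 p).natAbs = 0 := by omega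
    simpa [Int.natAbs_eq_zero] using this
  -- second injection into shells
  set Sh : ℕ → Type := fun N => {m : (Fin K × Fin d) → ℤ // Msup m = N + 1} with hSh_def
  set σ : {m : (Fin K × Fin d) → ℤ // m ≠ 0} → Σ N : ℕ, Sh N :=
    fun m => ⟨Msup m.1 - 1, ⟨m.1, by have := hMsup1 m; omega⟩⟩ with hσ_def
  have hσinj : Function.Injective σ := by
    intro a b hab
    apply Subtype.ext
    have := congrArg (fun q : Σ N : ℕ, Sh N => q.2.1) hab
    exact this
  -- the dominating function on shells
  set g : (Σ N : ℕ, Sh N) → ℝ≥0∞ :=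
    fun q => ENNReal.ofReal (c ^ s) * ENNReal.ofReal (((q.1 : ℝ) + 1) ^ (-s)) with hg_def
  have hGg : ∀ m : {m : (Fin K × Fin d) → ℤ // m ≠ 0},
      ENNReal.ofReal (c ^ s) * ENNReal.ofReal (((Msup m.1 : ℝ)) ^ (-s)) = g (σ m) := by
    intro m
    have h1 := hMsup1 m
    have : ((Msup m.1 - 1 : ℕ) : ℝ) + 1 = (Msup m.1 : ℝ) := by
      have : (Msup m.1 - 1) + 1 = Msup m.1 := by omega
      exact_mod_cast congrArg (Nat.cast : ℕ → ℝ) this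
    simp only [hg_def]
    rw [this]
  -- shell cardinality bound
  have hshell : ∀ (N : ℕ) (cst : ℝ≥0∞),
      ∑' _ : Sh N, cst ≤ ((3 * (N + 1)) ^ (d * K) : ℕ) * cst := by
    intro N cst
    have hβmem : ∀ m : Sh N, ∀ p, (m.1 p + (N + 1 : ℤ)).toNat < 2 * N + 3 := by
      intro m p
      have h1 : (m.1 p).natAbs ≤ Msup m.1 :=
        Finset.le_sup (f := fun p => (m.1 p).natAbs) (Finset.mem_univ p)
      rw [m.2] at h1
      omega
    have hβlb : ∀ m : Sh N, ∀ p, -(N + 1 : ℤ) ≤ m.1 p := by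
      intro m p
      have h1 : (m.1 p).natAbs ≤ Msup m.1 :=
        Finset.le_sup (f := fun p => (m.1 p).natAbs) (Finset.mem_univ p)
      rw [m.2] at h1
      omega
    have hβinj : Function.Injective
        (fun (m : Sh N) (p : Fin K × Fin d) =>
          (⟨(m.1 p + (N + 1 : ℤ)).toNat, hβmem m p⟩ : Fin (2 * N + 3))) := by
      intro a b hab
      apply Subtype.ext
      funext p
      have h2 := Fin.val_eq_of_eq (congrFun hab p)
      have ha := hβlb a p
      have hb := hβlb b p
      simp only at h2
      omega
    calc ∑' _ : Sh N, cst ≤ ∑' _ : (Fin K × Fin d → Fin (2 * N + 3)), cst :=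
          ENNReal.tsum_comp_le_tsum_of_injective hβinj (fun _ => cst)
      _ = (Fintype.card (Fin K × Fin d → Fin (2 * N + 3)) : ℝ≥0∞) * cst := by
          rw [tsum_fintype, Finset.sum_const, Finset.card_univ, nsmul_eq_mul]
      _ ≤ ((3 * (N + 1)) ^ (d * K) : ℕ) * cst := by
          gcongr
          rw [Fintype.card_fun]
          simp only [Fintype.card_fin, Fintype.card_prod]
          calc (2 * N + 3) ^ (K * d) ≤ (3 * (N + 1)) ^ (K * d) :=
                Nat.pow_le_pow_left (by omega) _
            _ = (3 * (N + 1)) ^ (d * K) := by rw [Nat.mul_comm K d]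
  -- per-shell real estimate
  have hperN : ∀ N : ℕ, (((3 * (N + 1)) ^ (d * K) : ℕ) : ℝ≥0∞) *
      (ENNReal.ofReal (c ^ s) * ENNReal.ofReal (((N : ℝ) + 1) ^ (-s)))
      ≤ ENNReal.ofReal (3 ^ (d * K) * ((N : ℝ) + 1) ^ (-t) * c ^ s) := by
    intro N
    have hNp : (0 : ℝ) < (N : ℝ) + 1 := by positivity
    have hpow : ((N : ℝ) + 1) ^ (d * K) * ((N : ℝ) + 1) ^ (-s) = ((N : ℝ) + 1) ^ (-t) := by
      rw [← Real.rpow_natCast ((N : ℝ) + 1) (d * K), ← Real.rpow_add hNp]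
      congr 1
      rw [hs_def]
      push_cast
      ring
    have hcast : (((3 * (N + 1)) ^ (d * K) : ℕ) : ℝ≥0∞) =
        ENNReal.ofReal ((3 * ((N : ℝ) + 1)) ^ (d * K)) := by
      rw [← ENNReal.ofReal_natCast]
      congr 1
      push_cast
      ring
    rw [hcast, ← ENNReal.ofReal_mul (by positivity), ← ENNReal.ofReal_mul (by positivity)]
    apply ENNReal.ofReal_le_ofReal
    have heq : (3 * ((N : ℝ) + 1)) ^ (d * K) * (c ^ s * ((N : ℝ) + 1) ^ (-s)) =
        3 ^ (d * K) * (((N : ℝ) + 1) ^ (d * K) * ((N : ℝ) + 1) ^ (-s)) * c ^ s := by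
      rw [mul_pow]; ring
    rw [heq, hpow]
  -- the grand chain in ℝ≥0∞
  have hbound : ∑' X : D, ENNReal.ofReal (‖X.1‖ ^ (-s)) ≤ ENNReal.ofReal B := by
    calc ∑' X : D, ENNReal.ofReal (‖X.1‖ ^ (-s))
        ≤ ∑' X : D, g (σ (ι₀ X)) := by
          refine ENNReal.tsum_le_tsum fun X => ?_
          rw [← hGg (ι₀ X)]
          have h1 : ENNReal.ofReal (‖X.1‖ ^ (-s)) ≤
              ENNReal.ofReal (c ^ s * ((M X : ℝ)) ^ (-s)) :=
            ENNReal.ofReal_le_ofReal (hpt X)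
          rw [ENNReal.ofReal_mul (by positivity)] at h1
          exact h1.trans_eq (by rw [hMM X])
      _ ≤ ∑' m : {m : (Fin K × Fin d) → ℤ // m ≠ 0}, g (σ m) :=
          ENNReal.tsum_comp_le_tsum_of_injective hι₀inj (fun m => g (σ m))
      _ ≤ ∑' q : Σ N : ℕ, Sh N, g q :=
          ENNReal.tsum_comp_le_tsum_of_injective hσinj g
      _ = ∑' N : ℕ, ∑' _ : Sh N,
            (ENNReal.ofReal (c ^ s) * ENNReal.ofReal (((N : ℝ) + 1) ^ (-s))) :=
          ENNReal.tsum_sigma (β := Sh) (fun N _ => ENNReal.ofReal (c ^ s) *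
            ENNReal.ofReal (((N : ℝ) + 1) ^ (-s)))
      _ ≤ ∑' N : ℕ, (((3 * (N + 1)) ^ (d * K) : ℕ) : ℝ≥0∞) *
            (ENNReal.ofReal (c ^ s) * ENNReal.ofReal (((N : ℝ) + 1) ^ (-s))) :=
          ENNReal.tsum_le_tsum fun N => hshell N _
      _ ≤ ∑' N : ℕ, ENNReal.ofReal (3 ^ (d * K) * ((N : ℝ) + 1) ^ (-t) * c ^ s) :=
          ENNReal.tsum_le_tsum hperN
      _ = ENNReal.ofReal (∑' N : ℕ, 3 ^ (d * K) * ((N : ℝ) + 1) ^ (-t) * c ^ s) :=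
          (ENNReal.ofReal_tsum_of_nonneg (fun N => by positivity)
            ((hζsum.mul_left _).mul_right _)).symm
      _ = ENNReal.ofReal B := by
          congr 1
          rw [hB_def, hζ_def]
          rw [tsum_mul_right, tsum_mul_left]
  -- conclude in ℝ
  have hfin : (∑' X : D, ENNReal.ofReal (‖X.1‖ ^ (-s))) ≠ ⊤ :=
    (hbound.trans_lt ENNReal.ofReal_lt_top).ne
  have hsum : Summable (fun X : D => ‖X.1‖ ^ (-s)) := by
    refine (ENNReal.summable_toReal hfin).congr fun X => ?_
    exact ENNReal.toReal_ofReal (Real.rpow_nonneg (norm_nonneg _) _)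
  have hofReal := ENNReal.ofReal_tsum_of_nonneg
    (fun X : D => Real.rpow_nonneg (norm_nonneg _) (-s)) hsum
  rw [← hofReal] at hbound
  exact (ENNReal.ofReal_le_ofReal_iff hB0).mp hbound

/-- The `i`-th successive minimum (`0`-indexed: `succMin Λ i = λ_{i+1}(Λ)`). -/
noncomputable def succMin {E : Type*} [NormedAddCommGroup E] [NormedSpace ℝ E]
    (Λ : AddSubgroup E) (i : ℕ) : ℝ :=
  sInf {r : ℝ | ∃ v : Fin (i + 1) → E, LinearIndependent ℝ v ∧ ∀ j, v j ∈ Λ ∧ ‖v j‖ ≤ r}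

/-- Let `Λ ⊂ ℝ^d` be a full-rank lattice with dual `Λ*`, `K ≥ 1` an integer and `t > 1`.
Then `Σ_{0 ≠ X ∈ (Λ*)^K} ‖X‖^{-dK-t} ≤ 6^{dK} ζ(t) λ_d(Λ)^{dK+t}`, where
`ζ(t) = Σ_{n ≥ 1} n^{-t}` is the Riemann zeta function. -/
theorem stmt_6 (d K : ℕ) (hd : 0 < d) (hK : 0 < K)
    (b : Module.Basis (Fin d) ℝ (EuclideanSpace ℝ (Fin d)))
    (Λ : AddSubgroup (EuclideanSpace ℝ (Fin d)))
    (hΛ : Λ = AddSubgroup.closure (Set.range b))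
    (t : ℝ) (ht : 1 < t) :
    ∑' X : {X : PiLp 2 (fun _ : Fin K => EuclideanSpace ℝ (Fin d)) //
        (∀ k, ∀ y ∈ Λ, ∃ n : ℤ, (inner ℝ (X k) y : ℝ) = n) ∧ X ≠ 0},
      ‖(X : PiLp 2 (fun _ : Fin K => EuclideanSpace ℝ (Fin d)))‖ ^ (-((d * K : ℝ) + t))
      ≤ 6 ^ (d * K) * (∑' n : ℕ, ((n : ℝ) + 1) ^ (-t)) *
          succMin Λ (d - 1) ^ ((d * K : ℝ) + t) := by
  classical
  have hd' : d - 1 + 1 = d := Nat.succ_pred_eq_of_pos hd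
  set S : Set ℝ := {r : ℝ | ∃ v : Fin (d - 1 + 1) → EuclideanSpace ℝ (Fin d),
      LinearIndependent ℝ v ∧ ∀ j, v j ∈ Λ ∧ ‖v j‖ ≤ r} with hS_def
  have hlam : succMin Λ (d - 1) = sInf S := rfl
  -- S is nonempty
  have hmemΛ : ∀ i, b i ∈ Λ := by
    intro i
    rw [hΛ]
    exact AddSubgroup.subset_closure (Set.mem_range_self i)
  have hSne : S.Nonempty := by
    refine ⟨∑ i, ‖b i‖, fun j => b (Fin.cast hd' j), ?_, fun j => ⟨hmemΛ _, ?_⟩⟩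
    · exact b.linearIndependent.comp _ (Fin.cast_injective hd')
    · exact Finset.single_le_sum (f := fun i => ‖b i‖) (fun i _ => norm_nonneg _)
        (Finset.mem_univ _)
  -- S is bounded below by 0
  have hSlb : ∀ r ∈ S, (0 : ℝ) ≤ r := by
    rintro r ⟨v, -, hv⟩
    exact (norm_nonneg (v 0)).trans (hv 0).2
  have hlam0 : 0 ≤ sInf S := le_csInf hSne hSlb
  set ζ : ℝ := ∑' n : ℕ, ((n : ℝ) + 1) ^ (-t) with hζ_def
  have hζ0 : 0 ≤ ζ := tsum_nonneg fun n => Real.rpow_nonneg (by positivity) _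
  set L : ℝ := ∑' X : {X : PiLp 2 (fun _ : Fin K => EuclideanSpace ℝ (Fin d)) //
      (∀ k, ∀ y ∈ Λ, ∃ n : ℤ, (inner ℝ (X k) y : ℝ) = n) ∧ X ≠ 0},
      ‖(X : PiLp 2 (fun _ : Fin K => EuclideanSpace ℝ (Fin d)))‖ ^ (-((d * K : ℝ) + t))
      with hL_def
  -- for every ε > 0
  have hstep : ∀ ε : ℝ, 0 < ε →
      L ≤ 3 ^ (d * K) * ζ * (sInf S + ε) ^ ((d * K : ℝ) + t) := by
    intro ε hε
    obtain ⟨r, hrS, hrlt⟩ := Real.lt_sInf_add_pos hSne hε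
    obtain ⟨v, hvi, hv⟩ := hrS
    set v' : Fin d → EuclideanSpace ℝ (Fin d) := v ∘ (Fin.cast hd'.symm) with hv'_def
    have hvi' : LinearIndependent ℝ v' := hvi.comp _ (Fin.cast_injective hd'.symm)
    have hc : 0 < sInf S + ε := by linarith
    exact key d K hd hK Λ t ht (sInf S + ε) hc v' hvi' (fun j => (hv _).1)
      (fun j => ((hv _).2).trans (by linarith))
  -- take ε → 0
  have hlim : L ≤ 3 ^ (d * K) * ζ * sInf S ^ ((d * K : ℝ) + t) := by
    have hcont : ContinuousAt (fun x : ℝ => x ^ ((d * K : ℝ) + t)) (sInf S) :=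
      Real.continuousAt_rpow_const _ _ (Or.inr (by positivity))
    have htend : Filter.Tendsto (fun ε : ℝ => 3 ^ (d * K) * ζ * (sInf S + ε) ^ ((d * K : ℝ) + t))
        (nhdsWithin 0 (Set.Ioi 0)) (nhds (3 ^ (d * K) * ζ * sInf S ^ ((d * K : ℝ) + t))) := by
      apply Filter.Tendsto.const_mul
      have h1 : Filter.Tendsto (fun ε : ℝ => sInf S + ε) (nhdsWithin 0 (Set.Ioi 0))
          (nhds (sInf S)) := by
        have h2 : Filter.Tendsto (fun ε : ℝ => sInf S + ε) (nhds 0) (nhds (sInf S + 0)) :=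
          (continuous_const.add continuous_id).tendsto 0
        rw [add_zero] at h2
        exact h2.mono_left nhdsWithin_le_nhds
      exact (hcont.tendsto.comp h1)
    exact ge_of_tendsto htend (Filter.eventually_of_mem self_mem_nhdsWithin
      fun ε hε => hstep ε hε)
  refine hlim.trans ?_
  rw [hlam]
  have h36 : (3 : ℝ) ^ (d * K) ≤ 6 ^ (d * K) := by
    apply pow_le_pow_left₀ (by norm_num) (by norm_num)
  have : (0:ℝ) ≤ sInf S ^ ((d * K : ℝ) + t) := Real.rpow_nonneg hlam0 _
  nlinarith [mul_le_mul_of_nonneg_right (mul_le_mul_of_nonneg_right h36 hζ0) this]
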